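/- Consider the PnP model: R° ∈ SO(3), t° ∈ ℝ³, deterministic points (pᵢ)_{i∈ℕ} ⊂ ℝ³ with ‖pᵢ‖ ≤ K and depths dᵢ = e₃ᵀ(R°pᵢ + t°) ≥ δ for constants K, δ > 0, and observations qᵢ' = W E (R°pᵢ + t°)/dᵢ + εᵢ, where the scalar noise coordinates ε_{i,j} (i ∈ ℕ, j ∈ {1,2}) are mutually independent identically distributed real random variables with mean 0, variance σ², and finite fourth moment. Then (1/n)(Aₙᵀ bₙ − Bₙᵀ bₙ) − σ² (1/n) Gₙᵀ 1_{2n} converges in probability to the zero vector in ℝ¹¹ as n → ∞, where 1_{2n} ∈ ℝ^{2n} is the all-ones vector. -/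

import Mathlib

open MeasureTheory ProbabilityTheory Matrix Finset

/-- `W = diag(f_x, f_y)`. -/
def Wmat (fx fy : ℝ) : Matrix (Fin 2) (Fin 2) ℝ := Matrix.diagonal ![fx, fy]

/-- `E = [e₁ e₂]ᵀ ∈ ℝ^{2×3}`, whose rows are the first two standard basis vectors of `ℝ³`. -/
def Emat : Matrix (Fin 2) (Fin 3) ℝ := Matrix.of fun i j => if (i : ℕ) = (j : ℕ) then 1 else 0

/-- Row `2i−1` of `A`: `[−u(pᵢ−p̄)ᵀ, f_x pᵢᵀ, f_x, 0_{1×4}]`. -/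
def rowU (fx u : ℝ) (p pbar : Fin 3 → ℝ) : Fin 11 → ℝ := fun k =>
  if h : (k : ℕ) < 3 then -u * (p ⟨k, h⟩ - pbar ⟨k, h⟩)
  else if h2 : (k : ℕ) < 6 then fx * p ⟨(k : ℕ) - 3, by omega⟩
  else if (k : ℕ) = 6 then fx else 0

/-- Row `2i` of `A`: `[−v(pᵢ−p̄)ᵀ, 0_{1×4}, f_y pᵢᵀ, f_y]`. -/
def rowV (fy v : ℝ) (p pbar : Fin 3 → ℝ) : Fin 11 → ℝ := fun k =>
  if h : (k : ℕ) < 3 then -v * (p ⟨k, h⟩ - pbar ⟨k, h⟩)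
  else if (k : ℕ) < 7 then 0
  else if h2 : (k : ℕ) < 10 then fy * p ⟨(k : ℕ) - 7, by omega⟩ else fy

/-- The pair of rows of `A` (or `B`) associated with a point `p` and observation `q = (u,v)ᵀ`. -/
def Arow (fx fy : ℝ) (q : Fin 2 → ℝ) (p pbar : Fin 3 → ℝ) : Fin 2 → Fin 11 → ℝ :=
  ![rowU fx (q 0) p pbar, rowV fy (q 1) p pbar]

/-- The row `[−(pᵢ−p̄)ᵀ, 0_{1×8}]` of `G` (repeated twice per point). -/
def Grow (p pbar : Fin 3 → ℝ) : Fin 11 → ℝ := fun k =>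
  if h : (k : ℕ) < 3 then -(p ⟨k, h⟩ - pbar ⟨k, h⟩) else 0

/-- Chebyshev bound for a finite sum of pairwise independent, centered, `L²` random variables. -/
lemma cheb_sum {Ω : Type*} [MeasurableSpace Ω] (μ : Measure Ω) [IsProbabilityMeasure μ]
    {ι : Type*} (s : Finset ι) (X : ι → Ω → ℝ)
    (hL2 : ∀ i ∈ s, MemLp (X i) 2 μ)
    (hind : Set.Pairwise ↑s fun i j => IndepFun (X i) (X j) μ)
    (hmean : ∀ i ∈ s, ∫ ω, X i ω ∂μ = 0)
    (M : ℝ) (hM : 0 ≤ M) (hvar : ∀ i ∈ s, variance (X i) μ ≤ M)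
    {c : ℝ} (hc : 0 < c) :
    (μ {ω | c ≤ |∑ i ∈ s, X i ω|}).toReal ≤ s.card * M / c ^ 2 := by
  have hS2 : MemLp (∑ i ∈ s, X i) 2 μ := memLp_finset_sum' _ hL2
  have hmean' : μ[∑ i ∈ s, X i] = 0 := by
    simp only [Finset.sum_apply]
    rw [integral_finset_sum _ (fun i hi => (hL2 i hi).integrable one_le_two)]
    exact Finset.sum_eq_zero hmean
  have hvarS : variance (∑ i ∈ s, X i) μ ≤ s.card * M := by
    rw [IndepFun.variance_sum hL2 hind]
    calc ∑ i ∈ s, variance (X i) μ ≤ ∑ i ∈ s, M := Finset.sum_le_sum hvar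
    _ = s.card * M := by simp [mul_comm]
  have h1 : μ {ω | c ≤ |∑ i ∈ s, X i ω|} ≤ ENNReal.ofReal (s.card * M / c ^ 2) := by
    have := meas_ge_le_variance_div_sq (μ := μ) hS2 hc
    rw [hmean'] at this
    refine le_trans ?_ (le_trans this ?_)
    · apply le_of_eq; congr 1; ext ω; simp
    · exact ENNReal.ofReal_le_ofReal (by
        apply div_le_div_of_nonneg_right hvarS (by positivity) |>.trans_eq rfl)
  calc (μ {ω | c ≤ |∑ i ∈ s, X i ω|}).toReal
      ≤ (ENNReal.ofReal (s.card * M / c ^ 2)).toReal :=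
        ENNReal.toReal_mono ENNReal.ofReal_ne_top h1
    _ ≤ s.card * M / c ^ 2 := by rw [ENNReal.toReal_ofReal (by positivity)]

lemma Arow_sub (fx fy : ℝ) (q1 q2 : Fin 2 → ℝ) (pp pb : Fin 3 → ℝ) (j : Fin 2) (k : Fin 11) :
    Arow fx fy q1 pp pb j k - Arow fx fy q2 pp pb j k = (q1 j - q2 j) * Grow pp pb k := by
  fin_cases j <;>
    simp only [Arow, Fin.mk_zero, Fin.mk_one, Matrix.cons_val_zero, Matrix.cons_val_one,
      Matrix.head_cons, rowU, rowV, Grow] <;>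
    split_ifs <;> ring

lemma Grow_abs_le (pp pb : Fin 3 → ℝ) (K : ℝ) (hK : 0 ≤ K)
    (h1 : ∀ m, |pp m| ≤ K) (h2 : ∀ m, |pb m| ≤ K) (k : Fin 11) :
    |Grow pp pb k| ≤ 2 * K := by
  unfold Grow
  split_ifs with h
  · have := h1 ⟨k, h⟩; have := h2 ⟨k, h⟩
    rw [abs_neg]
    calc |pp ⟨k, h⟩ - pb ⟨k, h⟩| ≤ |pp ⟨k, h⟩| + |pb ⟨k, h⟩| := abs_sub _ _
    _ ≤ 2 * K := by linarith
  · simpa using hK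

set_option maxHeartbeats 2000000 in
/-- in the PnP model, `(1/n)(Aₙᵀbₙ − Bₙᵀbₙ) − σ²(1/n)Gₙᵀ1_{2n}` converges in
probability to the zero vector of `ℝ¹¹`. Rows of the `2n`-row matrices are indexed by
`Fin n × Fin 2`. -/
theorem Atb_minus_Btb_bias_converges
    {Ω : Type*} [MeasurableSpace Ω] (μ : Measure Ω) [IsProbabilityMeasure μ]
    (fx fy : ℝ) (hfx : 0 < fx) (hfy : 0 < fy)
    (R : Matrix (Fin 3) (Fin 3) ℝ) (hRorth : Rᵀ * R = 1) (hRdet : R.det = 1)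
    (t : Fin 3 → ℝ)
    (p : ℕ → Fin 3 → ℝ) (K δ : ℝ) (hK : 0 < K) (hδ : 0 < δ)
    (hpK : ∀ i, ‖p i‖ ≤ K)
    (d : ℕ → ℝ) (hd : ∀ i, d i = (R.mulVec (p i) + t) 2) (hdδ : ∀ i, δ ≤ d i)
    (ε : ℕ → Fin 2 → Ω → ℝ) (σ : ℝ)
    (hmeas : ∀ i j, Measurable (ε i j))
    (hindep : iIndepFun (fun ij : ℕ × Fin 2 => ε ij.1 ij.2) μ)
    (hident : ∀ i j, IdentDistrib (ε i j) (ε 0 0) μ μ)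
    (hmom4 : ∀ i j, Integrable (fun ω => (ε i j ω) ^ 4) μ)
    (hmean : ∀ i j, ∫ ω, ε i j ω ∂μ = 0)
    (hvar : ∀ i j, ∫ ω, (ε i j ω) ^ 2 ∂μ = σ ^ 2)
    (qo : ℕ → Fin 2 → ℝ)
    (hqo : ∀ i, qo i = (d i)⁻¹ • (Wmat fx fy * Emat).mulVec (R.mulVec (p i) + t))
    (q : ℕ → Ω → Fin 2 → ℝ)
    (hq : ∀ i ω, q i ω = qo i + fun j => ε i j ω)
    (pbar : ℕ → Fin 3 → ℝ)
    (hpbar : ∀ n : ℕ, pbar n = (n : ℝ)⁻¹ • ∑ i ∈ Finset.range n, p i)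
    (A : (n : ℕ) → Ω → Matrix (Fin n × Fin 2) (Fin 11) ℝ)
    (hA : ∀ (n : ℕ) (ω : Ω) (ij : Fin n × Fin 2),
      A n ω ij = Arow fx fy (q ij.1 ω) (p ij.1) (pbar n) ij.2)
    (B : (n : ℕ) → Matrix (Fin n × Fin 2) (Fin 11) ℝ)
    (hB : ∀ (n : ℕ) (ij : Fin n × Fin 2),
      B n ij = Arow fx fy (qo ij.1) (p ij.1) (pbar n) ij.2)
    (G : (n : ℕ) → Matrix (Fin n × Fin 2) (Fin 11) ℝ)
    (hG : ∀ (n : ℕ) (ij : Fin n × Fin 2), G n ij = Grow (p ij.1) (pbar n))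
    (b : (n : ℕ) → Ω → Fin n × Fin 2 → ℝ)
    (hb : ∀ (n : ℕ) (ω : Ω) (ij : Fin n × Fin 2), b n ω ij = q ij.1 ω ij.2) :
    ∀ η : ℝ, 0 < η →
      Filter.Tendsto
        (fun n : ℕ =>
          (μ {ω | η < ‖(n : ℝ)⁻¹ • ((A n ω)ᵀ.mulVec (b n ω) - (B n)ᵀ.mulVec (b n ω))
              - σ ^ 2 • ((n : ℝ)⁻¹ • ((G n)ᵀ.mulVec (fun _ => 1)))‖}).toReal)
        Filter.atTop (nhds 0) := by
  intro η hη
  -- constants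
  set T : ℝ := |t 0| + |t 1| + |t 2| with hT
  set Fc : ℝ := max fx fy with hFc
  set Cq : ℝ := δ⁻¹ * (Fc * (3 * K + T)) with hCqdef
  set m4 : ℝ := ∫ ω, (ε 0 0 ω) ^ 4 ∂μ with hm4def
  have hm4nonneg : 0 ≤ m4 := by
    rw [hm4def]; exact integral_nonneg fun ω => by positivity
  have hTnn : 0 ≤ T := by rw [hT]; positivity
  have hCqnn : 0 ≤ Cq := by rw [hCqdef]; positivity
  set M : ℝ := (2 * K) ^ 2 * (2 * Cq ^ 2 * σ ^ 2 + 2 * m4 + 2 * σ ^ 4) with hMdef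
  have hMnn : 0 ≤ M := by rw [hMdef]; positivity
  -- entry bounds
  have hR1 : ∀ a c : Fin 3, |R a c| ≤ 1 := by
    intro a c
    have h := congrFun (congrFun hRorth c) c
    rw [Matrix.mul_apply] at h
    simp only [Matrix.transpose_apply, Matrix.one_apply_eq] at h
    have h2 : R a c * R a c ≤ ∑ k, R k c * R k c :=
      Finset.single_le_sum (fun k _ => mul_self_nonneg (R k c)) (Finset.mem_univ a)
    rw [h] at h2
    exact abs_le.mpr ⟨by nlinarith, by nlinarith⟩
  have hpm : ∀ i m, |p i m| ≤ K := by
    intro i m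
    have h := norm_le_pi_norm (p i) m
    rw [Real.norm_eq_abs] at h
    exact h.trans (hpK i)
  have hpb : ∀ n m, |pbar n m| ≤ K := by
    intro n m
    rw [hpbar]
    simp only [Pi.smul_apply, Finset.sum_apply, smul_eq_mul]
    rcases Nat.eq_zero_or_pos n with h0 | hpos
    · subst h0; simp [hK.le]
    · rw [abs_mul, abs_inv, Nat.abs_cast]
      calc (n : ℝ)⁻¹ * |∑ i ∈ Finset.range n, p i m|
          ≤ (n : ℝ)⁻¹ * ∑ i ∈ Finset.range n, |p i m| := by
            gcongr
            exact Finset.abs_sum_le_sum_abs _ _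
        _ ≤ (n : ℝ)⁻¹ * ∑ i ∈ Finset.range n, K := by
            gcongr with i hi
            exact hpm i m
        _ = K := by
            rw [Finset.sum_const, Finset.card_range, nsmul_eq_mul]
            field_simp
  have ht : ∀ m : Fin 3, |t m| ≤ T := by
    have h0 := abs_nonneg (t 0); have h1 := abs_nonneg (t 1); have h2 := abs_nonneg (t 2)
    intro m
    fin_cases m
    · show |t 0| ≤ T; rw [hT]; linarith
    · show |t 1| ≤ T; rw [hT]; linarith
    · show |t 2| ≤ T; rw [hT]; linarith
  have hqob : ∀ i j, |qo i j| ≤ Cq := by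
    intro i j
    have hv : ∀ m : Fin 3, |(R.mulVec (p i) + t) m| ≤ 3 * K + T := by
      intro m
      simp only [Pi.add_apply, Matrix.mulVec, dotProduct]
      calc |(∑ k, R m k * p i k) + t m| ≤ |∑ k, R m k * p i k| + |t m| := abs_add_le _ _
        _ ≤ (∑ k, |R m k * p i k|) + |t m| := by
            gcongr; exact Finset.abs_sum_le_sum_abs _ _
        _ ≤ (∑ _k : Fin 3, K) + T := by
            gcongr with k hk
            · rw [abs_mul]
              calc |R m k| * |p i k| ≤ 1 * K :=
                mul_le_mul (hR1 m k) (hpm i k) (abs_nonneg _) zero_le_one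
              _ = K := one_mul K
            · exact ht m
        _ = 3 * K + T := by
            simp only [Finset.sum_const, Finset.card_univ, Fintype.card_fin, nsmul_eq_mul]
            push_cast
            ring
    have hdpos : 0 < d i := lt_of_lt_of_le hδ (hdδ i)
    have hdinv : (d i)⁻¹ ≤ δ⁻¹ := by
      apply inv_anti₀ hδ (hdδ i)
    have hdinvnn : 0 ≤ (d i)⁻¹ := by positivity
    rw [hqo]
    simp only [Pi.smul_apply, smul_eq_mul]
    rw [abs_mul, abs_of_nonneg hdinvnn]
    have hWE : |((Wmat fx fy * Emat).mulVec (R.mulVec (p i) + t)) j| ≤ Fc * (3 * K + T) := by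
      have e0 : ((Wmat fx fy * Emat).mulVec (R.mulVec (p i) + t)) 0
          = fx * (R.mulVec (p i) + t) 0 := by
        simp [Wmat, Emat, Matrix.mulVec, Matrix.mul_apply, dotProduct,
          Fin.sum_univ_succ, Matrix.diagonal]
      have e1 : ((Wmat fx fy * Emat).mulVec (R.mulVec (p i) + t)) 1
          = fy * (R.mulVec (p i) + t) 1 := by
        simp [Wmat, Emat, Matrix.mulVec, Matrix.mul_apply, dotProduct,
          Fin.sum_univ_succ, Matrix.diagonal]
      fin_cases j
      · rw [Fin.mk_zero, e0, abs_mul, abs_of_pos hfx]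
        exact mul_le_mul (le_max_left _ _) (hv 0) (abs_nonneg _) (by positivity)
      · rw [Fin.mk_one, e1, abs_mul, abs_of_pos hfy]
        exact mul_le_mul (le_max_right _ _) (hv 1) (abs_nonneg _) (by positivity)
    rw [hCqdef]
    exact mul_le_mul hdinv hWE (abs_nonneg _) (by positivity)
  -- integrability of noise moments
  have Int1 : ∀ i j, Integrable (ε i j) μ := by
    intro i j
    refine Integrable.mono' ((integrable_const (1 : ℝ)).add (hmom4 i j))
      (hmeas i j).aestronglyMeasurable (Filter.Eventually.of_forall fun ω => ?_)
    simp only [Real.norm_eq_abs, Pi.add_apply]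
    rcases abs_cases (ε i j ω) with ⟨he, _⟩ | ⟨he, _⟩ <;> rw [he] <;>
      nlinarith [sq_nonneg (ε i j ω), sq_nonneg ((ε i j ω) ^ 2 - 1), sq_nonneg (ε i j ω - 1),
        sq_nonneg (ε i j ω + 1)]
  have Int2 : ∀ i j, Integrable (fun ω => (ε i j ω) ^ 2) μ := by
    intro i j
    refine Integrable.mono' ((integrable_const (1 : ℝ)).add (hmom4 i j))
      ((hmeas i j).pow_const 2).aestronglyMeasurable (Filter.Eventually.of_forall fun ω => ?_)
    simp only [Real.norm_eq_abs, Pi.add_apply]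
    rw [abs_of_nonneg (sq_nonneg _)]
    nlinarith [sq_nonneg ((ε i j ω) ^ 2 - 1), sq_nonneg (ε i j ω)]
  have hL2eps : ∀ i j, MemLp (ε i j) 2 μ := by
    intro i j
    refine (memLp_two_iff_integrable_sq (hmeas i j).aestronglyMeasurable).mpr ?_
    exact Int2 i j
  have hL2sq : ∀ i j, MemLp (fun ω => (ε i j ω) ^ 2) 2 μ := by
    intro i j
    refine (memLp_two_iff_integrable_sq
      ((hmeas i j).pow_const 2).aestronglyMeasurable).mpr ?_
    have h44 : ∀ ω, ((ε i j ω) ^ 2) ^ 2 = (ε i j ω) ^ 4 := fun ω => by ring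
    simp only [h44]
    exact hmom4 i j
  have hm4' : ∀ i j, ∫ ω, (ε i j ω) ^ 4 ∂μ = m4 := by
    intro i j
    rw [hm4def]
    exact ((hident i j).comp (measurable_id.pow_const 4)).integral_eq
  -- the summands
  set X : ℕ → Fin 11 → ℕ × Fin 2 → Ω → ℝ := fun n k ij ω =>
    Grow (p ij.1) (pbar n) k *
      (qo ij.1 ij.2 * ε ij.1 ij.2 ω + ((ε ij.1 ij.2 ω) ^ 2 - σ ^ 2)) with hXdef
  have hL2X : ∀ n k ij, MemLp (X n k ij) 2 μ := by
    intro n k ij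
    exact (((hL2eps ij.1 ij.2).const_mul (qo ij.1 ij.2)).add
      ((hL2sq ij.1 ij.2).sub (memLp_const (σ ^ 2)))).const_mul _
  have hIntf : ∀ (i : ℕ) (j : Fin 2), Integrable
      (fun ω => qo i j * ε i j ω + ((ε i j ω) ^ 2 - σ ^ 2)) μ := by
    intro i j
    exact ((Int1 i j).const_mul _).add ((Int2 i j).sub (integrable_const _))
  have hmeanX : ∀ n k ij, ∫ ω, X n k ij ω ∂μ = 0 := by
    intro n k ij
    rw [hXdef]
    simp only
    have If1 : Integrable (fun ω => qo ij.1 ij.2 * ε ij.1 ij.2 ω) μ :=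
      (Int1 ij.1 ij.2).const_mul _
    have If2 : Integrable (fun ω => (ε ij.1 ij.2 ω) ^ 2 - σ ^ 2) μ :=
      (Int2 ij.1 ij.2).sub (integrable_const _)
    rw [integral_const_mul, integral_add If1 If2, integral_const_mul,
      integral_sub (Int2 ij.1 ij.2) (integrable_const _), hmean, hvar, integral_const]
    simp
  have hvarX : ∀ n k ij, variance (X n k ij) μ ≤ M := by
    intro n k ij
    have hASM : AEStronglyMeasurable (X n k ij) μ := (hL2X n k ij).aestronglyMeasurable
    refine (variance_le_expectation_sq hASM).trans ?_
    have hXsq : ∀ ω, (X n k ij ω) ^ 2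
        ≤ (2 * K) ^ 2 * (2 * Cq ^ 2 * (ε ij.1 ij.2 ω) ^ 2
            + 2 * (ε ij.1 ij.2 ω) ^ 4 + 2 * σ ^ 4) := by
      intro ω
      have hg : |Grow (p ij.1) (pbar n) k| ≤ 2 * K :=
        Grow_abs_le _ _ K hK.le (hpm ij.1) (hpb n) k
      have hq' : |qo ij.1 ij.2| ≤ Cq := hqob ij.1 ij.2
      have hg2 : (Grow (p ij.1) (pbar n) k) ^ 2 ≤ (2 * K) ^ 2 := sq_le_sq' (by linarith [abs_le.mp hg |>.1]) (abs_le.mp hg |>.2)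
      have hq2 : (qo ij.1 ij.2) ^ 2 ≤ Cq ^ 2 := sq_le_sq' (by linarith [abs_le.mp hq' |>.1]) (abs_le.mp hq' |>.2)
      rw [hXdef]
      simp only
      set e := ε ij.1 ij.2 ω
      set g := Grow (p ij.1) (pbar n) k
      set c := qo ij.1 ij.2
      have hf2 : (c * e + (e ^ 2 - σ ^ 2)) ^ 2
          ≤ 2 * Cq ^ 2 * e ^ 2 + 2 * e ^ 4 + 2 * σ ^ 4 := by
        nlinarith [sq_nonneg (c * e - (e ^ 2 - σ ^ 2)), sq_nonneg e, sq_nonneg σ,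
          mul_nonneg (sq_nonneg e) (sq_nonneg σ), sq_nonneg (c * e), sq_nonneg (e ^ 2 - σ ^ 2),
          mul_le_mul_of_nonneg_right hq2 (sq_nonneg e)]
      calc (g * (c * e + (e ^ 2 - σ ^ 2))) ^ 2
          = g ^ 2 * (c * e + (e ^ 2 - σ ^ 2)) ^ 2 := by ring
        _ ≤ (2 * K) ^ 2 * (2 * Cq ^ 2 * e ^ 2 + 2 * e ^ 4 + 2 * σ ^ 4) := by
            apply mul_le_mul hg2 hf2 (sq_nonneg _) (by positivity)
    have hIntRHS : Integrable (fun ω => (2 * K) ^ 2 * (2 * Cq ^ 2 * (ε ij.1 ij.2 ω) ^ 2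
        + 2 * (ε ij.1 ij.2 ω) ^ 4 + 2 * σ ^ 4)) μ := by
      exact ((((Int2 ij.1 ij.2).const_mul _).add ((hmom4 ij.1 ij.2).const_mul _)).add
        (integrable_const _)).const_mul _
    have hXint : Integrable (fun ω => (X n k ij ω) ^ 2) μ := by
      have := (hL2X n k ij).integrable_sq
      simpa [pow_two] using this
    have h1 : μ[(X n k ij) ^ 2] ≤ ∫ ω, (2 * K) ^ 2 * (2 * Cq ^ 2 * (ε ij.1 ij.2 ω) ^ 2
        + 2 * (ε ij.1 ij.2 ω) ^ 4 + 2 * σ ^ 4) ∂μ := by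
      apply integral_mono (by exact hXint) hIntRHS
      intro ω
      simpa [pow_two] using hXsq ω
    refine h1.trans ?_
    have Ig1 : Integrable (fun ω => 2 * Cq ^ 2 * (ε ij.1 ij.2 ω) ^ 2) μ :=
      (Int2 ij.1 ij.2).const_mul _
    have Ig2 : Integrable (fun ω => 2 * (ε ij.1 ij.2 ω) ^ 4) μ :=
      (hmom4 ij.1 ij.2).const_mul _
    have Ig12 : Integrable (fun ω => 2 * Cq ^ 2 * (ε ij.1 ij.2 ω) ^ 2
        + 2 * (ε ij.1 ij.2 ω) ^ 4) μ := Ig1.add Ig2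
    rw [integral_const_mul, integral_add Ig12 (integrable_const _),
      integral_add Ig1 Ig2, integral_const_mul, integral_const_mul, hvar, hm4', integral_const]
    rw [hMdef]
    simp
  -- pairwise independence
  have hpind : ∀ n k, Set.Pairwise
      ↑(Finset.range n ×ˢ (Finset.univ : Finset (Fin 2)))
      (fun ij ij' => IndepFun (X n k ij) (X n k ij') μ) := by
    intro n k ij _ ij' _ hne
    have base : IndepFun (ε ij.1 ij.2) (ε ij'.1 ij'.2) μ := hindep.indepFun hne
    have hφ : ∀ (g c : ℝ), Measurable fun x : ℝ => g * (c * x + (x ^ 2 - σ ^ 2)) := by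
      intro g c; fun_prop
    exact base.comp (hφ (Grow (p ij.1) (pbar n) k) (qo ij.1 ij.2))
      (hφ (Grow (p ij'.1) (pbar n) k) (qo ij'.1 ij'.2))
  -- the pointwise identity
  have hpt : ∀ (n : ℕ) (ω : Ω) (k : Fin 11),
      ((n : ℝ)⁻¹ • ((A n ω)ᵀ.mulVec (b n ω) - (B n)ᵀ.mulVec (b n ω))
        - σ ^ 2 • ((n : ℝ)⁻¹ • ((G n)ᵀ.mulVec (fun _ => 1)))) k
      = (n : ℝ)⁻¹ * ∑ ij ∈ Finset.range n ×ˢ (Finset.univ : Finset (Fin 2)),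
          X n k ij ω := by
    intro n ω k
    have hterm : ∀ (i : ℕ) (j : Fin 2),
        Arow fx fy (q i ω) (p i) (pbar n) j k * q i ω j
          - Arow fx fy (qo i) (p i) (pbar n) j k * q i ω j
          - σ ^ 2 * Grow (p i) (pbar n) k
        = X n k (i, j) ω := by
      intro i j
      have h1 := Arow_sub fx fy (q i ω) (qo i) (p i) (pbar n) j k
      have h2 : q i ω j = qo i j + ε i j ω := by rw [hq]; simp
      rw [hXdef]
      simp only
      rw [h2] at h1 ⊢
      linear_combination (qo i j + ε i j ω) * h1
    have hAB : ∀ (ij : Fin n × Fin 2),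
        A n ω ij k * b n ω ij - B n ij k * b n ω ij - σ ^ 2 * G n ij k
        = X n k (ij.1, ij.2) ω := by
      intro ij
      rw [hA, hB, hG, hb]
      exact hterm ij.1 ij.2
    simp only [Pi.sub_apply, Pi.smul_apply, smul_eq_mul, Matrix.mulVec, dotProduct,
      Matrix.transpose_apply]
    rw [Finset.sum_product]
    rw [show (∑ i ∈ Finset.range n, ∑ j : Fin 2, X n k (i, j) ω)
        = ∑ i : Fin n, ∑ j : Fin 2, X n k ((i : ℕ), j) ω from
      (Fin.sum_univ_eq_sum_range (fun i => ∑ j : Fin 2, X n k (i, j) ω) n).symm]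
    rw [show (∑ i : Fin n, ∑ j : Fin 2, X n k ((i : ℕ), j) ω)
        = ∑ ij : Fin n × Fin 2, X n k ((ij.1 : ℕ), ij.2) ω from
      (Fintype.sum_prod_type (f := fun ij : Fin n × Fin 2 => X n k ((ij.1 : ℕ), ij.2) ω)).symm]
    rw [← Finset.sum_sub_distrib]
    rw [show ∀ S1 S3 : ℝ, (n : ℝ)⁻¹ * S1 - σ ^ 2 * ((n : ℝ)⁻¹ * S3)
        = (n : ℝ)⁻¹ * (S1 - σ ^ 2 * S3) from fun S1 S3 => by ring]
    rw [Finset.mul_sum (Finset.univ) (fun ij : Fin n × Fin 2 => G n ij k * 1) (σ ^ 2),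
      ← Finset.sum_sub_distrib]
    congr 1
    apply Finset.sum_congr rfl
    intro ij _
    rw [mul_one]
    exact hAB ij
  -- per-coordinate Chebyshev bound
  have hkbound : ∀ (n : ℕ), 1 ≤ n → ∀ (k : Fin 11),
      (μ {ω | η < |(n : ℝ)⁻¹ * ∑ ij ∈ Finset.range n ×ˢ (Finset.univ : Finset (Fin 2)),
          X n k ij ω|}).toReal ≤ 2 * M / (n * η ^ 2) := by
    intro n hn k
    have hnpos : (0 : ℝ) < n := by exact_mod_cast hn
    have hsub : {ω | η < |(n : ℝ)⁻¹ * ∑ ij ∈ Finset.range n ×ˢ (Finset.univ : Finset (Fin 2)),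
        X n k ij ω|} ⊆ {ω | (n : ℝ) * η ≤ |∑ ij ∈ Finset.range n ×ˢ (Finset.univ : Finset (Fin 2)),
        X n k ij ω|} := by
      intro ω hω
      simp only [Set.mem_setOf_eq] at hω ⊢
      rw [abs_mul, abs_inv, abs_of_pos hnpos] at hω
      have h2 : (n : ℝ) * η < (n : ℝ) * ((n : ℝ)⁻¹ *
          |∑ ij ∈ Finset.range n ×ˢ (Finset.univ : Finset (Fin 2)), X n k ij ω|) :=
        mul_lt_mul_of_pos_left hω hnpos
      rw [← mul_assoc, mul_inv_cancel₀ hnpos.ne', one_mul] at h2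
      exact h2.le
    have hcheb := cheb_sum μ (Finset.range n ×ˢ (Finset.univ : Finset (Fin 2)))
      (X n k) (fun ij _ => hL2X n k ij) (hpind n k) (fun ij _ => hmeanX n k ij)
      M hMnn (fun ij _ => hvarX n k ij) (c := (n : ℝ) * η) (by positivity)
    have hcard : ((Finset.range n ×ˢ (Finset.univ : Finset (Fin 2))).card : ℝ) = 2 * n := by
      rw [Finset.card_product, Finset.card_range, Finset.card_univ]
      simp [mul_comm]
    have hmono : (μ {ω | η < |(n : ℝ)⁻¹ * ∑ ij ∈ Finset.range n ×ˢ (Finset.univ : Finset (Fin 2)),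
        X n k ij ω|}).toReal ≤ (μ {ω | (n : ℝ) * η ≤ |∑ ij ∈ Finset.range n ×ˢ
        (Finset.univ : Finset (Fin 2)), X n k ij ω|}).toReal :=
      ENNReal.toReal_mono (measure_ne_top μ _) (measure_mono hsub)
    refine hmono.trans (hcheb.trans ?_)
    rw [hcard]
    rw [show ((n : ℝ) * η) ^ 2 = (n : ℝ) ^ 2 * η ^ 2 from by ring]
    rw [div_le_div_iff₀ (by positivity) (by positivity)]
    ring_nf
    nlinarith [sq_nonneg ((n : ℝ) - 1), mul_nonneg hMnn (sq_nonneg η), hnpos]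
  -- union bound
  have hbound : ∀ (n : ℕ), 1 ≤ n →
      (μ {ω | η < ‖(n : ℝ)⁻¹ • ((A n ω)ᵀ.mulVec (b n ω) - (B n)ᵀ.mulVec (b n ω))
          - σ ^ 2 • ((n : ℝ)⁻¹ • ((G n)ᵀ.mulVec (fun _ => 1)))‖}).toReal
        ≤ (22 * M / η ^ 2) / n := by
    intro n hn
    set Y : Ω → Fin 11 → ℝ := fun ω =>
      (n : ℝ)⁻¹ • ((A n ω)ᵀ.mulVec (b n ω) - (B n)ᵀ.mulVec (b n ω))
        - σ ^ 2 • ((n : ℝ)⁻¹ • ((G n)ᵀ.mulVec (fun _ => 1))) with hYdef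
    have hsub : {ω | η < ‖Y ω‖} ⊆ ⋃ k : Fin 11, {ω | η < |Y ω k|} := by
      intro ω hω
      simp only [Set.mem_setOf_eq] at hω
      by_contra hcon
      simp only [Set.mem_iUnion, Set.mem_setOf_eq, not_exists, not_lt] at hcon
      have : ‖Y ω‖ ≤ η := by
        rw [pi_norm_le_iff_of_nonneg hη.le]
        intro k
        rw [Real.norm_eq_abs]
        exact hcon k
      linarith
    have hU : μ {ω | η < ‖Y ω‖} ≤ ∑ k : Fin 11, μ {ω | η < |Y ω k|} := by
      refine (measure_mono hsub).trans ?_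
      refine (measure_iUnion_le _).trans ?_
      rw [tsum_fintype]
    have hkk : ∀ k : Fin 11, (μ {ω | η < |Y ω k|}).toReal ≤ 2 * M / (n * η ^ 2) := by
      intro k
      have : {ω | η < |Y ω k|} = {ω | η < |(n : ℝ)⁻¹ *
          ∑ ij ∈ Finset.range n ×ˢ (Finset.univ : Finset (Fin 2)), X n k ij ω|} := by
        ext ω
        simp only [Set.mem_setOf_eq, hYdef]
        rw [hpt n ω k]
      rw [this]
      exact hkbound n hn k
    have hfin : (∑ k : Fin 11, μ {ω | η < |Y ω k|}) ≠ ⊤ :=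
      (ENNReal.sum_lt_top.mpr (fun k _ => (measure_lt_top μ _))).ne
    calc (μ {ω | η < ‖Y ω‖}).toReal
        ≤ (∑ k : Fin 11, μ {ω | η < |Y ω k|}).toReal := ENNReal.toReal_mono hfin hU
      _ = ∑ k : Fin 11, (μ {ω | η < |Y ω k|}).toReal :=
          ENNReal.toReal_sum (fun k _ => measure_ne_top μ _)
      _ ≤ ∑ _k : Fin 11, 2 * M / (n * η ^ 2) := Finset.sum_le_sum (fun k _ => hkk k)
      _ = 11 * (2 * M / (n * η ^ 2)) := by
          rw [Finset.sum_const, Finset.card_univ, Fintype.card_fin, nsmul_eq_mul]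
          norm_num
      _ = (22 * M / η ^ 2) / n := by
          have hnpos : (0 : ℝ) < n := by exact_mod_cast hn
          field_simp
          ring
  -- final squeeze
  have hC : Filter.Tendsto (fun n : ℕ => (22 * M / η ^ 2) / n) Filter.atTop (nhds 0) :=
    tendsto_const_div_atTop_nhds_zero_nat _
  refine squeeze_zero' (Filter.Eventually.of_forall fun n => ENNReal.toReal_nonneg)
    ?_ hC
  filter_upwards [Filter.eventually_ge_atTop 1] with n hn
  exact hbound n hn
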